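/- For N ≤ x, the function K(N) = C₂·F(N−1)·G(N), where C₂ = ∏_{p>2}(1 − 1/(p−1)²), F(n) = ∏_{p|n, p>2}(1 − 1/(p−1)²)⁻¹ · ∏_{p|n}(1 − 1/((p−1)²(p+1))), and G(n) = ∏_{p|n, p>2}(1 − 1/(p−1)²)⁻¹ · ∏_{p^α ∥ n}(1 − 1/(p^α(p−1))). That is, the function K of Definition 1 admits this factorization for all N ≥ 2. -/

import Mathlib

/-- The Euler factor at `p` of the function `K(N)` from Definition 1. Here
`((N-1)/p)² = 1` if `p ∤ N - 1` and `0` if `p ∣ N - 1`. -/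
noncomputable def Kfactor (N : ℕ) (p : ℕ) : ℝ :=
  if p ∣ N then
    1 - 1/((p:ℝ)^(N.factorization p) * ((p:ℝ) - 1))
  else
    1 - ((if (p:ℤ) ∣ ((N:ℤ) - 1) then (0:ℝ) else 1) * (p:ℝ) + 1)
          / (((p:ℝ) - 1)^2 * ((p:ℝ) + 1))

/-- The function `K(N)` of Definition 1, as a product over all primes. -/
noncomputable def K (N : ℕ) : ℝ := ∏' p : Nat.Primes, Kfactor N (p : ℕ)

/-- The twin prime constant `C₂ = ∏_{p > 2} (1 - 1/(p-1)²)`. -/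
noncomputable def C₂ : ℝ :=
  ∏' p : Nat.Primes, if (p : ℕ) = 2 then 1 else (1 - 1/(((p:ℕ):ℝ) - 1)^2)

/-- The multiplicative function `F` from the paper. -/
noncomputable def F (n : ℕ) : ℝ :=
  (∏ p ∈ n.primeFactors.filter (fun p => 2 < p), (1 - 1/((p:ℝ) - 1)^2)⁻¹)
    * ∏ p ∈ n.primeFactors, (1 - 1/(((p:ℝ) - 1)^2 * ((p:ℝ) + 1)))

/-- The multiplicative function `G` from the paper. -/
noncomputable def G (n : ℕ) : ℝ :=
  (∏ p ∈ n.primeFactors.filter (fun p => 2 < p), (1 - 1/((p:ℝ) - 1)^2)⁻¹)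
    * ∏ p ∈ n.primeFactors, (1 - 1/((p:ℝ)^(n.factorization p) * ((p:ℝ) - 1)))

open Real

noncomputable def cf (p : Nat.Primes) : ℝ :=
  if (p : ℕ) = 2 then 1 else (1 - 1/(((p:ℕ):ℝ) - 1)^2)

noncomputable def Ffac (p : ℕ) : ℝ :=
  (if 2 < p then (1 - 1/((p:ℝ) - 1)^2)⁻¹ else 1)
    * (1 - 1/(((p:ℝ) - 1)^2 * ((p:ℝ) + 1)))

noncomputable def Gfac (N p : ℕ) : ℝ :=
  (if 2 < p then (1 - 1/((p:ℝ) - 1)^2)⁻¹ else 1)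
    * (1 - 1/((p:ℝ)^(N.factorization p) * ((p:ℝ) - 1)))

lemma cf_lb (p : Nat.Primes) : 3/4 ≤ cf p := by
  unfold cf
  split
  · norm_num
  · rename_i h
    have hp3 : 3 ≤ (p:ℕ) := (p.2.two_le.lt_of_ne (Ne.symm h))
    have : (3:ℝ) ≤ ((p:ℕ):ℝ) := by exact_mod_cast hp3
    have h2 : (2:ℝ) ≤ ((p:ℕ):ℝ) - 1 := by linarith
    have h4 : (4:ℝ) ≤ (((p:ℕ):ℝ) - 1)^2 := by nlinarith
    have : 1/(((p:ℕ):ℝ) - 1)^2 ≤ 1/4 := by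
      apply div_le_div_of_nonneg_left <;> linarith
    linarith

lemma cf_pos (p : Nat.Primes) : 0 < cf p := lt_of_lt_of_le (by norm_num) (cf_lb p)

lemma multipliable_cf : Multipliable cf := by
  apply Real.multipliable_of_summable_log (fun p => cf_pos p)
  apply Summable.of_abs
  have hsum : Summable (fun p : Nat.Primes => 8/(((p:ℕ):ℝ))^2) := by
    have : Summable (fun n : ℕ => 8 * (1/(n:ℝ)^2)) :=
      ((Real.summable_one_div_nat_pow).2 one_lt_two).mul_left 8
    have := this.subtype (setOf Nat.Prime)
    apply this.congr
    intro p
    simp only [Function.comp_apply]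
    ring
  apply hsum.of_nonneg_of_le (fun p => abs_nonneg _)
  intro p
  by_cases h2 : (p:ℕ) = 2
  · simp [cf, h2]
    positivity
  · have hp3 : 3 ≤ (p:ℕ) := (p.2.two_le.lt_of_ne (Ne.symm h2))
    have hp3' : (3:ℝ) ≤ ((p:ℕ):ℝ) := by exact_mod_cast hp3
    set q : ℝ := ((p:ℕ):ℝ) with hq
    have hcf : cf p = 1 - 1/(q-1)^2 := by simp [cf, h2, hq]
    have h4 : (4:ℝ) ≤ (q-1)^2 := by nlinarith
    have hx1 : 1/(q-1)^2 ≤ 1/4 := by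
      apply div_le_div_of_nonneg_left <;> linarith
    have hxpos : 0 < 1/(q-1)^2 := by positivity
    have hcfpos : (0:ℝ) < cf p := cf_pos p
    have hcfle : cf p ≤ 1 := by rw [hcf]; linarith
    have hlog : |log (cf p)| = - log (cf p) := by
      rw [abs_of_nonpos]
      exact log_nonpos (by linarith) hcfle
    rw [hlog]
    have : -log (cf p) = log (cf p)⁻¹ := (Real.log_inv _).symm
    rw [this]
    have hbd : log (cf p)⁻¹ ≤ (cf p)⁻¹ - 1 :=
      Real.log_le_sub_one_of_pos (by positivity)
    set a : ℝ := 1/(q-1)^2 with ha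
    have hinv : (cf p)⁻¹ ≤ 1 + 2 * a := by
      rw [hcf]
      have hpos : (0:ℝ) < 1 - a := by rw [ha, ← hcf]; exact hcfpos
      rw [inv_le_iff_one_le_mul₀ hpos]
      nlinarith
    have hlast : 2 * a ≤ 8/q^2 := by
      rw [ha, mul_one_div, div_le_div_iff₀ (by nlinarith) (by nlinarith)]
      nlinarith
    linarith

lemma hcf_ne {p : ℕ} (hp3 : 2 < p) : (1 - 1/((p:ℝ) - 1)^2) ≠ 0 := by
  have h3 : (3:ℝ) ≤ (p:ℝ) := by exact_mod_cast hp3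
  have h2 : (2:ℝ) ≤ (p:ℝ) - 1 := by linarith
  have h4 : (4:ℝ) ≤ ((p:ℝ) - 1)^2 := by nlinarith
  have : 1/((p:ℝ) - 1)^2 ≤ 1/4 := by
    apply div_le_div_of_nonneg_left <;> linarith
  intro h; linarith

lemma key (N : ℕ) (hN : 2 ≤ N) (p : Nat.Primes) :
    Kfactor N (p:ℕ) = cf p *
      ((if (p:ℕ) ∣ (N-1) then Ffac (p:ℕ) else 1) * (if (p:ℕ) ∣ N then Gfac N (p:ℕ) else 1)) := by
  obtain ⟨p, hp⟩ := p
  have hp2 : 2 ≤ p := hp.two_le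
  simp only [cf, Ffac, Gfac, Kfactor]
  have h2le : (2:ℝ) ≤ (p:ℝ) := by exact_mod_cast hp2
  have hq0 : ((p:ℝ) - 1) ≠ 0 := by linarith
  have hqp1 : ((p:ℝ) + 1) ≠ 0 := by positivity
  have hdvd_int : ((p:ℤ) ∣ ((N:ℤ) - 1)) ↔ p ∣ (N - 1) := by
    have h1 : ((N:ℤ) - 1) = ((N - 1 : ℕ) : ℤ) := by
      have : 1 ≤ N := by omega
      push_cast [this]; ring
    rw [h1, Int.natCast_dvd_natCast]
  by_cases hN' : p ∣ N
  · have hnd : ¬ p ∣ (N - 1) := by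
      intro h
      have h1 : p ∣ N - (N - 1) := Nat.dvd_sub hN' h
      have h2 : N - (N - 1) = 1 := by omega
      rw [h2] at h1
      have := Nat.le_of_dvd one_pos h1
      omega
    simp only [hN', if_pos, hnd, if_neg, not_false_iff, ite_false, one_mul]
    by_cases hp3 : 2 < p
    · have hne2 : p ≠ 2 := by omega
      simp only [hne2, if_neg, not_false_iff, ite_false, hp3, if_pos, ite_true]
      rw [← mul_assoc, mul_inv_cancel₀ (hcf_ne hp3), one_mul]
    · have he2 : p = 2 := by omega
      simp [he2]
  · simp only [hN', if_neg, not_false_iff, ite_false, mul_one]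
    by_cases hnd : p ∣ (N - 1)
    · simp only [hdvd_int, hnd, if_pos, ite_true]
      by_cases hp3 : 2 < p
      · have hne2 : p ≠ 2 := by omega
        simp only [hne2, if_neg, not_false_iff, ite_false, hp3, if_pos, ite_true]
        rw [← mul_assoc, mul_inv_cancel₀ (hcf_ne hp3), one_mul, zero_mul, zero_add]
      · have he2 : p = 2 := by omega
        subst he2
        norm_num
    · have hne2 : p ≠ 2 := by
        intro he; subst he
        omega
      simp only [hdvd_int, hnd, if_neg, not_false_iff, ite_false, hne2, one_mul, mul_one]
      have : ((p:ℝ) + 1) / (((p:ℝ) - 1)^2 * ((p:ℝ) + 1)) = 1/((p:ℝ) - 1)^2 := by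
        field_simp
      rw [this]

/-- Product of a divisibility-indicator function over primes of a union,
reduced to the primeFactors of one term. -/
lemma prod_ind (n : ℕ) (hn : n ≠ 0) (u : Finset ℕ) (hsub : n.primeFactors ⊆ u)
    (hprime : ∀ p ∈ u, p.Prime) (f : ℕ → ℝ) :
    ∏ p ∈ u, (if p ∣ n then f p else 1) = ∏ p ∈ n.primeFactors, f p := by
  rw [← Finset.prod_subset hsub]
  · apply Finset.prod_congr rfl
    intro p hp
    rw [if_pos (Nat.dvd_of_mem_primeFactors hp)]
  · intro p hpu hpn
    rw [if_neg]
    intro hdvd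
    exact hpn (Nat.mem_primeFactors.2 ⟨hprime p hpu, hdvd, hn⟩)

lemma prod_Ffac (n : ℕ) : ∏ p ∈ n.primeFactors, Ffac p = F n := by
  unfold Ffac F
  rw [Finset.prod_mul_distrib, Finset.prod_filter]

lemma prod_Gfac (n : ℕ) : ∏ p ∈ n.primeFactors, Gfac n p = G n := by
  unfold Gfac G
  rw [Finset.prod_mul_distrib, Finset.prod_filter]

theorem stmt_7 : ∀ N : ℕ, 2 ≤ N → K N = C₂ * F (N - 1) * G N := by
  intro N hN
  have hN0 : N ≠ 0 := by omega
  have hN1 : N - 1 ≠ 0 := by omega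
  set u : Finset ℕ := (N-1).primeFactors ∪ N.primeFactors with hu
  have hprime : ∀ p ∈ u, p.Prime := by
    intro p hp
    rcases Finset.mem_union.1 hp with h | h
    exacts [Nat.prime_of_mem_primeFactors h, Nat.prime_of_mem_primeFactors h]
  set s : Finset Nat.Primes := u.subtype Nat.Prime with hs
  set fg : Nat.Primes → ℝ := fun p =>
    (if (p:ℕ) ∣ (N-1) then Ffac (p:ℕ) else 1) * (if (p:ℕ) ∣ N then Gfac N (p:ℕ) else 1) with hfg
  have h_supp : Function.mulSupport fg ⊆ ↑s := by
    intro p hp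
    simp only [Set.mem_setOf_eq, Function.mem_mulSupport] at hp
    by_contra hps
    have hns : (p:ℕ) ∉ u := by
      intro h
      exact hps (Finset.mem_subtype.mpr h)
    have h1 : ¬ (p:ℕ) ∣ (N-1) := fun h =>
      hns (Finset.mem_union.2 (Or.inl (Nat.mem_primeFactors.2 ⟨p.2, h, hN1⟩)))
    have h2 : ¬ (p:ℕ) ∣ N := fun h =>
      hns (Finset.mem_union.2 (Or.inr (Nat.mem_primeFactors.2 ⟨p.2, h, hN0⟩)))
    apply hp
    simp [hfg, h1, h2]
  have hmul_fg : Multipliable fg :=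
    multipliable_of_finite_mulSupport (s.finite_toSet.subset h_supp)
  have hK : K N = (∏' p, cf p) * (∏' p, fg p) := by
    rw [K, tprod_congr (key N hN), multipliable_cf.tprod_mul hmul_fg]
  have hC : C₂ = ∏' p, cf p := rfl
  have htp : ∏' p, fg p = ∏ p ∈ s, fg p := tprod_eq_prod' h_supp
  have hsplit : ∏ p ∈ s, fg p = F (N-1) * G N := by
    rw [hfg, Finset.prod_mul_distrib]
    congr 1
    · refine Eq.trans
        (Finset.prod_subtype_eq_prod_filter (fun n => if n ∣ N - 1 then Ffac n else 1)) ?_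
      rw [Finset.filter_true_of_mem (fun p hp => hprime p hp),
        prod_ind (N-1) hN1 u Finset.subset_union_left hprime, prod_Ffac]
    · refine Eq.trans
        (Finset.prod_subtype_eq_prod_filter (fun n => if n ∣ N then Gfac N n else 1)) ?_
      rw [Finset.filter_true_of_mem (fun p hp => hprime p hp),
        prod_ind N hN0 u Finset.subset_union_right hprime, prod_Gfac]
  rw [hK, ← hC, htp, hsplit, mul_assoc]
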